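/- Let p ∈ P be a station and let a be a real number with 0 < a ≤ r/2. If S is an optimal solution, then the number of sensors s ∈ S such that a/2 ≤ dist(s, p) ≤ a and p is a nearest station to s (i.e., dist(s, p) ≤ dist(s, p') for all p' ∈ P) is at most 24. -/

import Mathlib

/-- The six unit vectors of a regular hexagon, as pairs of reals. -/
noncomputable def hexDir : Fin 6 → ℝ × ℝ
  | 0 => (1, 0)
  | 1 => (-1, 0)
  | 2 => (1/2, Real.sqrt 3 / 2)
  | 3 => (1/2, -(Real.sqrt 3 / 2))
  | 4 => (-(1/2), Real.sqrt 3 / 2)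
  | 5 => (-(1/2), -(Real.sqrt 3 / 2))

lemma hexDir_norm (i : Fin 6) : (hexDir i).1 ^ 2 + (hexDir i).2 ^ 2 = 1 := by
  have h3 : Real.sqrt 3 ^ 2 = 3 := Real.sq_sqrt (by norm_num)
  fin_cases i <;> simp [hexDir] <;> nlinarith [h3]

lemma sq_le_imp (x y : ℝ) (hx : 0 ≤ x) (hy : 0 ≤ y) (h : x ^ 2 ≤ y ^ 2) : x ≤ y := by
  nlinarith [add_nonneg hx hy]

lemma hexDir_choice (v0 v1 : ℝ) : ∃ i : Fin 6,
    0 ≤ v0 * (hexDir i).1 + v1 * (hexDir i).2 ∧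
    3 * (v0 ^ 2 + v1 ^ 2) ≤ 4 * (v0 * (hexDir i).1 + v1 * (hexDir i).2) ^ 2 := by
  have h3 : Real.sqrt 3 ^ 2 = 3 := Real.sq_sqrt (by norm_num)
  have h3n : (0:ℝ) ≤ Real.sqrt 3 := Real.sqrt_nonneg 3
  by_cases hc : 3 * v1 ^ 2 ≤ v0 ^ 2
  · rcases le_total 0 v0 with h0 | h0
    · exact ⟨0, by constructor <;> simp [hexDir] <;> nlinarith⟩
    · exact ⟨1, by constructor <;> simp [hexDir] <;> nlinarith⟩
  · push_neg at hc
    rcases le_total 0 v0 with h0 | h0 <;> rcases le_total 0 v1 with h1 | h1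
    · have hv : v0 ≤ Real.sqrt 3 * v1 :=
        sq_le_imp _ _ h0 (mul_nonneg h3n h1) (by nlinarith)
      refine ⟨2, ?_, ?_⟩ <;> simp [hexDir]
      · positivity
      · nlinarith [mul_le_mul_of_nonneg_left hv h0]
    · have hv : v0 ≤ Real.sqrt 3 * (-v1) :=
        sq_le_imp _ _ h0 (mul_nonneg h3n (by linarith)) (by nlinarith)
      refine ⟨3, ?_, ?_⟩ <;> simp [hexDir]
      · nlinarith
      · nlinarith [mul_le_mul_of_nonneg_left hv h0]
    · have hv : -v0 ≤ Real.sqrt 3 * v1 :=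
        sq_le_imp _ _ (by linarith) (mul_nonneg h3n h1) (by nlinarith)
      refine ⟨4, ?_, ?_⟩ <;> simp [hexDir]
      · nlinarith
      · nlinarith [mul_le_mul_of_nonneg_left hv (by linarith : (0:ℝ) ≤ -v0)]
    · have hv : -v0 ≤ Real.sqrt 3 * (-v1) :=
        sq_le_imp _ _ (by linarith) (mul_nonneg h3n (by linarith)) (by nlinarith)
      refine ⟨5, ?_, ?_⟩ <;> simp [hexDir]
      · nlinarith
      · nlinarith [mul_le_mul_of_nonneg_left hv (by linarith : (0:ℝ) ≤ -v0)]

lemma hex_final (r a ip P : ℝ) (ha : 0 < a) (har : a ≤ r / 2) (hr : 0 < r)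
    (hip0 : 0 ≤ ip) (hip : 3 * P ≤ 4 * ip ^ 2)
    (hPgt : r ^ 2 < P) (hPle : P ≤ (r + a) ^ 2) :
    P - 4 * a * ip + 4 * a ^ 2 ≤ r ^ 2 := by
  have h1 : 0 ≤ P - r ^ 2 := by linarith
  have h2 : 0 ≤ (r + a) ^ 2 - P := by linarith
  have key : (P + 4 * a ^ 2 - r ^ 2) ^ 2 ≤ 12 * a ^ 2 * P := by
    nlinarith [mul_nonneg h1 h2, mul_nonneg (mul_nonneg h1 ha.le) (by linarith : (0:ℝ) ≤ r - 2*a),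
      mul_nonneg (mul_nonneg h2 ha.le) (by linarith : (0:ℝ) ≤ r - 2*a),
      mul_pos ha ha, sq_nonneg (a*r), mul_nonneg (mul_nonneg ha.le ha.le) (mul_nonneg ha.le hr.le),
      mul_nonneg (mul_nonneg ha.le ha.le) (mul_nonneg hr.le hr.le)]
  have key2 : 12 * a ^ 2 * P ≤ (4 * a * ip) ^ 2 := by nlinarith [sq_nonneg a, mul_pos ha ha]
  have hY : 0 ≤ 4 * a * ip := by positivity
  nlinarith [key, key2, hY]

/-- Build a point of the Euclidean plane from coordinates. -/
noncomputable def mk2 (x y : ℝ) : EuclideanSpace ℝ (Fin 2) :=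
  (WithLp.equiv 2 (Fin 2 → ℝ)).symm ![x, y]

lemma dist_sq_eq (t p : EuclideanSpace ℝ (Fin 2)) :
    dist t p ^ 2 = (t 0 - p 0) ^ 2 + (t 1 - p 1) ^ 2 := by
  rw [EuclideanSpace.dist_eq, Real.sq_sqrt (by positivity)]
  simp [Fin.sum_univ_two, Real.dist_eq, sq_abs]

lemma mk2_norm (x y : ℝ) (h : x ^ 2 + y ^ 2 = 1) : ‖mk2 x y‖ = 1 := by
  rw [EuclideanSpace.norm_eq]
  simp [mk2, Fin.sum_univ_two, sq_abs, h]

/-- The set of points covered by a finite set `S` of sensors with sensing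
radius `r` includes every target: for each `t ∈ T` there is `s ∈ S` with
`dist s t ≤ r`. -/
def Covers (r : ℝ) (T : Set (EuclideanSpace ℝ (Fin 2)))
    (S : Finset (EuclideanSpace ℝ (Fin 2))) : Prop :=
  ∀ t ∈ T, ∃ s ∈ S, dist s t ≤ r

/-- The total moving cost of a sensor set `S`: each sensor moves from its
nearest station in `P`. -/
noncomputable def cost (P S : Finset (EuclideanSpace ℝ (Fin 2))) : ℝ :=
  ∑ s ∈ S, Metric.infDist s (P : Set (EuclideanSpace ℝ (Fin 2)))

/-- `S` is an optimal solution: it covers `T` and has minimum cost among all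
finite sensor sets covering `T`. -/
def Optimal (r : ℝ) (P : Finset (EuclideanSpace ℝ (Fin 2)))
    (T : Set (EuclideanSpace ℝ (Fin 2)))
    (S : Finset (EuclideanSpace ℝ (Fin 2))) : Prop :=
  Covers r T S ∧
    ∀ S' : Finset (EuclideanSpace ℝ (Fin 2)), Covers r T S' → cost P S ≤ cost P S'

theorem stmt_6 (r : ℝ) (hr : 0 < r)
    (P : Finset (EuclideanSpace ℝ (Fin 2))) (hP : P.Nonempty)
    (T : Set (EuclideanSpace ℝ (Fin 2)))
    (S : Finset (EuclideanSpace ℝ (Fin 2))) (hopt : Optimal r P T S)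
    (p : EuclideanSpace ℝ (Fin 2)) (hp : p ∈ P)
    (a : ℝ) (ha : 0 < a) (har : a ≤ r / 2) :
    {s : EuclideanSpace ℝ (Fin 2) | s ∈ S ∧
        a / 2 ≤ dist s p ∧ dist s p ≤ a ∧
        ∀ p' ∈ P, dist s p ≤ dist s p'}.ncard ≤ 24 := by
  classical
  obtain ⟨hcov, hmin⟩ := hopt
  set K : Finset (EuclideanSpace ℝ (Fin 2)) :=
    S.filter (fun s => a / 2 ≤ dist s p ∧ dist s p ≤ a ∧ ∀ p' ∈ P, dist s p ≤ dist s p')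
    with hKdef
  have hsetK : {s : EuclideanSpace ℝ (Fin 2) | s ∈ S ∧
      a / 2 ≤ dist s p ∧ dist s p ≤ a ∧ ∀ p' ∈ P, dist s p ≤ dist s p'}
      = (K : Set (EuclideanSpace ℝ (Fin 2))) := by
    ext s; simp [hKdef, Finset.mem_filter]
  rw [hsetK, Set.ncard_coe_finset]
  set C6 : Finset (EuclideanSpace ℝ (Fin 2)) :=
    Finset.image (fun i => p + (2 * a) • mk2 (hexDir i).1 (hexDir i).2) Finset.univ with hC6def
  set S' : Finset (EuclideanSpace ℝ (Fin 2)) := (S \ K) ∪ insert p C6 with hS'def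
  -- S' covers T
  have hcov' : Covers r T S' := by
    intro t ht
    obtain ⟨s, hs, hst⟩ := hcov t ht
    by_cases hsK : s ∈ K
    · have hpred := (Finset.mem_filter.1 hsK).2
      by_cases htr : dist p t ≤ r
      · exact ⟨p, Finset.mem_union_right _ (Finset.mem_insert_self p C6), htr⟩
      · push_neg at htr
        have htp : dist t p ≤ r + a := by
          have h1 : dist t p ≤ dist t s + dist s p := dist_triangle t s p
          rw [dist_comm t s] at h1; linarith [hpred.2.1]
        have hgt : r ^ 2 < (t 0 - p 0) ^ 2 + (t 1 - p 1) ^ 2 := by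
          rw [← dist_sq_eq t p]
          have h2 : r < dist t p := by rw [dist_comm]; exact htr
          nlinarith
        have hle2 : (t 0 - p 0) ^ 2 + (t 1 - p 1) ^ 2 ≤ (r + a) ^ 2 := by
          rw [← dist_sq_eq t p]
          nlinarith [dist_nonneg (x := t) (y := p)]
        obtain ⟨i, hip0, hip⟩ := hexDir_choice (t 0 - p 0) (t 1 - p 1)
        refine ⟨p + (2 * a) • mk2 (hexDir i).1 (hexDir i).2,
          Finset.mem_union_right _ (Finset.mem_insert_of_mem
            (Finset.mem_image_of_mem _ (Finset.mem_univ i))), ?_⟩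
        have hfin := hex_final r a _ _ ha har hr hip0 hip hgt hle2
        have hnorm := hexDir_norm i
        have hco0 : (p + (2 * a) • mk2 (hexDir i).1 (hexDir i).2) 0
            = p 0 + 2 * a * (hexDir i).1 := rfl
        have hco1 : (p + (2 * a) • mk2 (hexDir i).1 (hexDir i).2) 1
            = p 1 + 2 * a * (hexDir i).2 := rfl
        have hd2 : dist (p + (2 * a) • mk2 (hexDir i).1 (hexDir i).2) t ^ 2 ≤ r ^ 2 := by
          rw [dist_sq_eq, hco0, hco1]
          have hexp : (p 0 + 2 * a * (hexDir i).1 - t 0) ^ 2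
              + (p 1 + 2 * a * (hexDir i).2 - t 1) ^ 2
              = ((t 0 - p 0) ^ 2 + (t 1 - p 1) ^ 2)
                - 4 * a * ((t 0 - p 0) * (hexDir i).1 + (t 1 - p 1) * (hexDir i).2)
                + 4 * a ^ 2 * ((hexDir i).1 ^ 2 + (hexDir i).2 ^ 2) := by ring
          rw [hexp, hnorm]
          linarith
        calc dist (p + (2 * a) • mk2 (hexDir i).1 (hexDir i).2) t
            = Real.sqrt (dist (p + (2 * a) • mk2 (hexDir i).1 (hexDir i).2) t ^ 2) :=
              (Real.sqrt_sq dist_nonneg).symm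
          _ ≤ Real.sqrt (r ^ 2) := Real.sqrt_le_sqrt hd2
          _ = r := Real.sqrt_sq hr.le
    · exact ⟨s, Finset.mem_union_left _ (Finset.mem_sdiff.2 ⟨hs, hsK⟩), hst⟩
  -- cost comparison
  have hKsub : K ⊆ S := Finset.filter_subset _ _
  have hPmem : p ∈ (P : Set (EuclideanSpace ℝ (Fin 2))) := by simpa using hp
  have hsplit : cost P (S \ K) + cost P K = cost P S := Finset.sum_sdiff hKsub
  have hKlow : (K.card : ℝ) * (a / 2) ≤ cost P K := by
    have hb : ∀ s ∈ K, a / 2 ≤ Metric.infDist s (P : Set (EuclideanSpace ℝ (Fin 2))) := by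
      intro s hsK
      have hpred := (Finset.mem_filter.1 hsK).2
      by_contra hlt
      push_neg at hlt
      obtain ⟨y, hyP, hy⟩ := (Metric.infDist_lt_iff ⟨p, hPmem⟩).1 hlt
      have h1 := hpred.2.2 y (by simpa using hyP)
      linarith [hpred.1]
    have h2 := Finset.card_nsmul_le_sum K
      (fun s => Metric.infDist s (P : Set (EuclideanSpace ℝ (Fin 2)))) (a / 2) hb
    simpa [nsmul_eq_mul, cost] using h2
  have hunion : ∀ A B : Finset (EuclideanSpace ℝ (Fin 2)),
      cost P (A ∪ B) ≤ cost P A + cost P B := by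
    intro A B
    have h := Finset.sum_union_inter (s₁ := A) (s₂ := B)
      (f := fun s => Metric.infDist s (P : Set (EuclideanSpace ℝ (Fin 2))))
    have hnn : (0:ℝ) ≤ ∑ s ∈ A ∩ B, Metric.infDist s (P : Set (EuclideanSpace ℝ (Fin 2))) :=
      Finset.sum_nonneg fun _ _ => Metric.infDist_nonneg
    show (∑ s ∈ A ∪ B, Metric.infDist s (P : Set (EuclideanSpace ℝ (Fin 2)))) ≤ _
    unfold cost
    linarith
  have hC6cost : cost P C6 ≤ 6 * (2 * a) := by
    have hb : ∀ c ∈ C6, Metric.infDist c (P : Set (EuclideanSpace ℝ (Fin 2))) ≤ 2 * a := by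
      intro c hc
      obtain ⟨i, _, rfl⟩ := Finset.mem_image.1 hc
      have h1 : Metric.infDist (p + (2 * a) • mk2 (hexDir i).1 (hexDir i).2)
          (P : Set (EuclideanSpace ℝ (Fin 2)))
          ≤ dist (p + (2 * a) • mk2 (hexDir i).1 (hexDir i).2) p :=
        Metric.infDist_le_dist_of_mem hPmem
      have h2 : dist (p + (2 * a) • mk2 (hexDir i).1 (hexDir i).2) p
          = ‖(2 * a) • mk2 (hexDir i).1 (hexDir i).2‖ := dist_self_add_left _ p
      have h3 : ‖(2 * a) • mk2 (hexDir i).1 (hexDir i).2‖ = 2 * a := by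
        rw [norm_smul, mk2_norm _ _ (hexDir_norm i), Real.norm_eq_abs,
          abs_of_pos (by linarith), mul_one]
      rw [h2, h3] at h1
      exact h1
    have h4 := Finset.sum_le_card_nsmul C6
      (fun c => Metric.infDist c (P : Set (EuclideanSpace ℝ (Fin 2)))) (2 * a) hb
    have h5 : C6.card ≤ 6 := le_trans Finset.card_image_le (by simp)
    have h6 : (C6.card : ℝ) * (2 * a) ≤ 6 * (2 * a) := by
      apply mul_le_mul_of_nonneg_right _ (by linarith)
      exact_mod_cast h5
    calc cost P C6 ≤ C6.card • (2 * a) := h4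
      _ = (C6.card : ℝ) * (2 * a) := by rw [nsmul_eq_mul]
      _ ≤ 6 * (2 * a) := h6
  have hinscost : cost P (insert p C6) ≤ 12 * a := by
    have h1 : cost P (insert p C6) ≤ cost P {p} + cost P C6 := by
      rw [Finset.insert_eq]; exact hunion _ _
    have h2 : cost P {p} = 0 := by
      show (∑ s ∈ ({p} : Finset (EuclideanSpace ℝ (Fin 2))),
        Metric.infDist s (P : Set (EuclideanSpace ℝ (Fin 2)))) = 0
      rw [Finset.sum_singleton, Metric.infDist_zero_of_mem hPmem]
    linarith
  have hS'cost : cost P S' ≤ cost P (S \ K) + 12 * a := by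
    calc cost P S' ≤ cost P (S \ K) + cost P (insert p C6) := hunion _ _
      _ ≤ cost P (S \ K) + 12 * a := by linarith
  have hfinal := hmin S' hcov'
  have hkey : (K.card : ℝ) * (a / 2) ≤ 12 * a := by linarith
  have hk24 : (K.card : ℝ) ≤ 24 := by nlinarith
  exact_mod_cast hk24
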